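/- Fix a real C ≥ 0 and set α = (2 + C)/6. Let N(θ) = 1 − (C/2)·(α·(1 − e^{−iθ}) + (1 − α)·(e^{iθ} − 1)) and D(θ) = 1 + C·(1 − e^{−iθ}) − (C/2)·(α·(e^{−iθ} − e^{−2iθ}) + (1 − α)·(1 − e^{−iθ})). Then the function θ ↦ N(θ)/D(θ) − exp(−iCθ) is O(θ⁴) as θ → 0; that is, with the choice α = (2 + |C|)/6 the semi-implicit scheme reproduces the exact amplification factor e^{−iCθ} of the constant-coefficient advection equation up to fourth order in θ, which expresses its third-order accuracy for constant velocity. -/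

import Mathlib

open Asymptotics Filter

/-- Taylor remainder bound for the complex exponential along a real parameter. -/
lemma expTaylor_isBigO (c : ℂ) :
    (fun θ : ℝ => Complex.exp (c * θ) -
        (1 + c * θ + (c * θ) ^ 2 / 2 + (c * θ) ^ 3 / 6))
      =O[nhds 0] (fun θ : ℝ => θ ^ 4) := by
  have habs : Filter.Tendsto (fun θ : ℝ => ‖c * θ‖) (nhds 0) (nhds 0) := by
    have : Continuous fun θ : ℝ => ‖c * θ‖ := by continuity
    simpa using this.tendsto 0
  refine Asymptotics.IsBigO.of_bound (‖c‖ ^ 4) ?_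
  filter_upwards [habs.eventually (gt_mem_nhds (show (0:ℝ) < 1 by norm_num))] with θ hθ
  have hb := Complex.exp_bound (x := c * θ) (le_of_lt hθ) (n := 4) (by norm_num)
  have hsum : (∑ m ∈ Finset.range 4, (c * θ) ^ m / (m.factorial : ℂ)) =
      1 + c * θ + (c * θ) ^ 2 / 2 + (c * θ) ^ 3 / 6 := by
    norm_num [Finset.sum_range_succ, Nat.factorial]
  rw [hsum] at hb
  have hfac : ((Nat.succ 4 : ℝ) * ((Nat.factorial 4 : ℝ) * (4 : ℝ))⁻¹) ≤ 1 := by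
    norm_num [Nat.factorial]
  have h3 : ‖c * θ‖ ^ 4 = ‖c‖ ^ 4 * |θ| ^ 4 := by
    rw [norm_mul, mul_pow, Complex.norm_real, Real.norm_eq_abs]
  have hpos : (0:ℝ) ≤ ‖c * θ‖ ^ 4 := by positivity
  calc ‖Complex.exp (c * θ) - (1 + c * θ + (c * θ) ^ 2 / 2 + (c * θ) ^ 3 / 6)‖
      ≤ ‖c * θ‖ ^ 4 * ((Nat.succ 4 : ℝ) * ((Nat.factorial 4 : ℝ) * (4 : ℝ))⁻¹) := hb
    _ ≤ ‖c * θ‖ ^ 4 * 1 := by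
        exact mul_le_mul_of_nonneg_left hfac hpos
    _ = ‖c‖ ^ 4 * ‖θ ^ 4‖ := by
        rw [mul_one, h3]; simp [abs_pow]

/-- With the choice `α = (2 + C)/6`, the amplification factor `N(θ)/D(θ)` of the
parametric semi-implicit scheme reproduces the exact amplification factor
`exp(−iCθ)` of the constant-coefficient advection equation up to `O(θ⁴)` as
`θ → 0`, expressing third-order accuracy for constant velocity. -/
theorem semi_implicit_third_order_amplification (C : ℝ) (hC : 0 ≤ C) :
    (fun θ : ℝ =>
        (1 - ((C : ℂ) / 2) *
            ((((2 + C) / 6 : ℝ) : ℂ) * (1 - Complex.exp (-Complex.I * θ)) +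
              (1 - (((2 + C) / 6 : ℝ) : ℂ)) * (Complex.exp (Complex.I * θ) - 1))) /
          (1 + (C : ℂ) * (1 - Complex.exp (-Complex.I * θ)) -
            ((C : ℂ) / 2) *
            ((((2 + C) / 6 : ℝ) : ℂ) *
                (Complex.exp (-Complex.I * θ) - Complex.exp (-2 * Complex.I * θ)) +
              (1 - (((2 + C) / 6 : ℝ) : ℂ)) * (1 - Complex.exp (-Complex.I * θ)))) -
          Complex.exp (-Complex.I * C * θ))
      =O[nhds 0] (fun θ : ℝ => θ ^ 4) := by
  set I := Complex.I
  set a : ℂ := (((2 + C) / 6 : ℝ) : ℂ) with ha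
  set Cc : ℂ := (C : ℂ) with hCc
  set Nf : ℝ → ℂ := fun θ =>
    1 - (Cc / 2) * (a * (1 - Complex.exp (-I * θ)) +
      (1 - a) * (Complex.exp (I * θ) - 1)) with hNf
  set Df : ℝ → ℂ := fun θ =>
    1 + Cc * (1 - Complex.exp (-I * θ)) -
      (Cc / 2) * (a * (Complex.exp (-I * θ) - Complex.exp (-2 * I * θ)) +
        (1 - a) * (1 - Complex.exp (-I * θ))) with hDf
  set Ef : ℝ → ℂ := fun θ => Complex.exp (-I * C * θ) with hEf
  have haC : a = (2 + Cc) / 6 := by rw [ha, hCc]; push_cast; ring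
  -- the numerator minus denominator times exact factor is O(θ^4)
  have T : ℂ → ℝ → ℂ := fun c θ => 1 + c * θ + (c * θ) ^ 2 / 2 + (c * θ) ^ 3 / 6
  have key : ∀ θ : ℝ, Nf θ - Df θ * Ef θ =
      (-(Cc/2) * (1 - a)) * (Complex.exp (I * θ) -
        (1 + I * θ + (I * θ) ^ 2 / 2 + (I * θ) ^ 3 / 6)) +
      ((Cc/2) * a) * (Complex.exp (-I * θ) -
        (1 + (-I) * θ + ((-I) * θ) ^ 2 / 2 + ((-I) * θ) ^ 3 / 6)) +
      (-(1 + Cc - (Cc/2) * (1 - a))) * (Complex.exp ((-I * Cc) * θ) -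
        (1 + (-I * Cc) * θ + ((-I * Cc) * θ) ^ 2 / 2 + ((-I * Cc) * θ) ^ 3 / 6)) +
      (Cc + (Cc/2) * a - (Cc/2) * (1 - a)) * (Complex.exp ((-I * (1 + Cc)) * θ) -
        (1 + (-I * (1 + Cc)) * θ + ((-I * (1 + Cc)) * θ) ^ 2 / 2 +
          ((-I * (1 + Cc)) * θ) ^ 3 / 6)) +
      (-(Cc/2) * a) * (Complex.exp ((-I * (2 + Cc)) * θ) -
        (1 + (-I * (2 + Cc)) * θ + ((-I * (2 + Cc)) * θ) ^ 2 / 2 +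
          ((-I * (2 + Cc)) * θ) ^ 3 / 6)) := by
    intro θ
    have e1 : Complex.exp ((-I * (1 + Cc)) * θ) =
        Complex.exp (-I * θ) * Complex.exp (-I * C * θ) := by
      rw [← Complex.exp_add]; congr 1; rw [hCc]; ring
    have e2 : Complex.exp ((-I * (2 + Cc)) * θ) =
        Complex.exp (-2 * I * θ) * Complex.exp (-I * C * θ) := by
      rw [← Complex.exp_add]; congr 1; rw [hCc]; ring
    have e3 : Complex.exp ((-I * Cc) * θ) = Complex.exp (-I * C * θ) := by
      rw [hCc]
    rw [hNf, hDf, hEf, e1, e2, e3, haC]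
    simp only [hCc]
    ring
  -- combine the Taylor estimates
  have hsum :
      (fun θ : ℝ =>
        (-(Cc/2) * (1 - a)) * (Complex.exp (I * θ) -
          (1 + I * θ + (I * θ) ^ 2 / 2 + (I * θ) ^ 3 / 6)) +
        ((Cc/2) * a) * (Complex.exp (-I * θ) -
          (1 + (-I) * θ + ((-I) * θ) ^ 2 / 2 + ((-I) * θ) ^ 3 / 6)) +
        (-(1 + Cc - (Cc/2) * (1 - a))) * (Complex.exp ((-I * Cc) * θ) -
          (1 + (-I * Cc) * θ + ((-I * Cc) * θ) ^ 2 / 2 + ((-I * Cc) * θ) ^ 3 / 6)) +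
        (Cc + (Cc/2) * a - (Cc/2) * (1 - a)) * (Complex.exp ((-I * (1 + Cc)) * θ) -
          (1 + (-I * (1 + Cc)) * θ + ((-I * (1 + Cc)) * θ) ^ 2 / 2 +
            ((-I * (1 + Cc)) * θ) ^ 3 / 6)) +
        (-(Cc/2) * a) * (Complex.exp ((-I * (2 + Cc)) * θ) -
          (1 + (-I * (2 + Cc)) * θ + ((-I * (2 + Cc)) * θ) ^ 2 / 2 +
            ((-I * (2 + Cc)) * θ) ^ 3 / 6)))
        =O[nhds 0] (fun θ : ℝ => θ ^ 4) := by
    exact (((((expTaylor_isBigO I).const_mul_left _).add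
      ((expTaylor_isBigO (-I)).const_mul_left _)).add
      ((expTaylor_isBigO (-I * Cc)).const_mul_left _)).add
      ((expTaylor_isBigO (-I * (1 + Cc))).const_mul_left _)).add
      ((expTaylor_isBigO (-I * (2 + Cc))).const_mul_left _)
  have hg : (fun θ : ℝ => Nf θ - Df θ * Ef θ) =O[nhds 0] (fun θ : ℝ => θ ^ 4) :=
    hsum.congr (fun θ => (key θ).symm) (fun _ => rfl)
  -- the denominator is continuous and nonzero near 0
  have hDcont : ContinuousAt Df 0 := by
    rw [hDf]; fun_prop
  have hD0 : Df 0 = 1 := by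
    simp [hDf]
  have hne : ∀ᶠ θ : ℝ in nhds 0, Df θ ≠ 0 :=
    hDcont.eventually_ne (by rw [hD0]; norm_num)
  have hinv : Filter.Tendsto (fun θ => (Df θ)⁻¹) (nhds 0) (nhds 1) := by
    have h := hDcont.inv₀ (by rw [hD0]; norm_num)
    have : (Df 0)⁻¹ = 1 := by rw [hD0]; norm_num
    simpa only [ContinuousAt, Pi.inv_def, this] using h
  have hinvO : (fun θ => (Df θ)⁻¹) =O[nhds 0] (fun _ : ℝ => (1 : ℝ)) :=
    hinv.isBigO_one ℝ
  have hmul : (fun θ : ℝ => (Nf θ - Df θ * Ef θ) * (Df θ)⁻¹)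
      =O[nhds 0] (fun θ : ℝ => θ ^ 4) := by
    simpa [mul_one] using hg.mul hinvO
  refine hmul.congr' ?_ EventuallyEq.rfl
  filter_upwards [hne] with θ hθ
  show (Nf θ - Df θ * Ef θ) * (Df θ)⁻¹ = Nf θ / Df θ - Ef θ
  field_simp
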